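/- Let G be a finite group and χ an irreducible character of G with associated representation ρ on V. For one-dimensional characters ξ₁, ξ₂ of G with ξ₁χ = χ and ξ₂χ = χ, choose intertwiners φ₁: V → V_{ξ₁} and φ₂: V → V_{ξ₂} (isomorphisms satisfying φᵢρ(g) = ξᵢ(g)ρ(g)φᵢ). Then the commutator φ₂φ₁φ₂⁻¹φ₁⁻¹ is a scalar, this scalar is a root of unity independent of the choices of φ₁ and φ₂, and the resulting pairing (ξ₁,ξ₂) ↦ scalar(φ₂φ₁φ₂⁻¹φ₁⁻¹) on the stabilizer of χ is bilinear (multiplicative in each variable) and anti-symmetric, with value 1 when ξ₁ = ξ₂. -/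

import Mathlib

noncomputable section

/-- `φ : V → V_ξ` is an intertwiner: `φ (ρ g v) = ξ g • ρ g (φ v)`. -/
def Intertwines {G V : Type} [Group G] [AddCommGroup V] [Module ℂ V]
    (ρ : Representation ℂ G V) (ξ : G →* ℂ) (φ : V →ₗ[ℂ] V) : Prop :=
  ∀ g : G, φ ∘ₗ (ρ g) = ξ g • ((ρ g) ∘ₗ φ)

/-- `ξ` stabilizes the character `χ = tr ∘ ρ`:  `ξ·χ = χ`. -/
def StabilizesChar {G V : Type} [Group G] [AddCommGroup V] [Module ℂ V]
    (ρ : Representation ℂ G V) (ξ : G →* ℂ) : Prop :=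
  ∀ g : G, ξ g * LinearMap.trace ℂ V (ρ g) = LinearMap.trace ℂ V (ρ g)

namespace CommutatorPairing

open CategoryTheory

set_option linter.unusedSectionVars false

variable {G V : Type} [Group G] [Fintype G] [AddCommGroup V] [Module ℂ V]
  [FiniteDimensional ℂ V]

/-- The twist of `ρ` by a one-dimensional character `ξ`. -/
def twist (ρ : Representation ℂ G V) (ξ : G →* ℂ) : Representation ℂ G V where
  toFun g := ξ g • ρ g
  map_one' := by simp
  map_mul' g h := by
    ext v
    simp [mul_smul, smul_comm (ξ h)]

/-- Restriction of `ρ` to an invariant submodule. -/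
def subrep (ρ : Representation ℂ G V) (p : Submodule ℂ V) (hp : ∀ g : G, ∀ v ∈ p, ρ g v ∈ p) :
    Representation ℂ G p where
  toFun g := (ρ g).restrict (hp g)
  map_one' := by ext v; simp [LinearMap.restrict_apply]
  map_mul' g h := by ext v; simp [LinearMap.restrict_apply]

lemma invariant_submodule_eq_bot_or_top (ρ : Representation ℂ G V)
    (hirr : CategoryTheory.Simple (FDRep.of ρ)) (p : Submodule ℂ V)
    (hp : ∀ g : G, ∀ v ∈ p, ρ g v ∈ p) : p = ⊥ ∨ p = ⊤ := by
  by_cases hbot : p = ⊥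
  · exact Or.inl hbot
  right
  let ι : FDRep.of (subrep ρ p hp) ⟶ FDRep.of ρ :=
    { hom := FGModuleCat.ofHom p.subtype
      comm := fun g => by ext v; rfl }
  have hinj : Function.Injective ι.hom := Subtype.val_injective
  have : Mono ι := CategoryTheory.ConcreteCategory.mono_of_injective ι hinj
  have hne : ι ≠ 0 := by
    obtain ⟨v, hv, hv0⟩ := Submodule.exists_mem_ne_zero_of_ne_bot hbot
    intro h
    apply hv0
    have : ι.hom ⟨v, hv⟩ = 0 := by rw [h]; rfl
    exact this
  have : IsIso ι := isIso_of_mono_of_nonzero hne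
  have hsurj : Function.Surjective ι.hom := by
    intro v
    refine ⟨(CategoryTheory.inv ι).hom v, ?_⟩
    have h1 := CategoryTheory.IsIso.inv_hom_id ι
    have h2 : ((CategoryTheory.inv ι) ≫ ι).hom v = v := by rw [h1]; rfl
    exact h2
  rw [Submodule.eq_top_iff']
  intro v
  obtain ⟨⟨w, hw⟩, rfl⟩ := hsurj v
  exact hw

/-- Schur: two intertwiners for the same `ξ`, with the second bijective, are proportional. -/
lemma schur_scalar (ρ : Representation ℂ G V) (hirr : CategoryTheory.Simple (FDRep.of ρ))
    {ξ : G →* ℂ} {φ ψ : V →ₗ[ℂ] V} (hφ : Intertwines ρ ξ φ) (hψ : Intertwines ρ ξ ψ)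
    (hψb : Function.Bijective ψ) : ∃ c : ℂ, φ = c • ψ := by
  let e : V ≃ₗ[ℂ] V := LinearEquiv.ofBijective ψ hψb
  set f : V →ₗ[ℂ] V := (e.symm : V →ₗ[ℂ] V) ∘ₗ φ with hf
  have hcomm : ∀ g : G, f ∘ₗ ρ g = ρ g ∘ₗ f := by
    intro g
    ext v
    apply e.injective
    have h1 : e (f (ρ g v)) = φ (ρ g v) := e.apply_symm_apply _
    have h2 : ψ (ρ g (e.symm (φ v))) = ξ g • ρ g (ψ (e.symm (φ v))) := by
      have := congrArg (fun m : V →ₗ[ℂ] V => m (e.symm (φ v))) (hψ g)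
      simpa using this
    have h3 : ψ (e.symm (φ v)) = φ v := e.apply_symm_apply _
    have h4 : φ (ρ g v) = ξ g • ρ g (φ v) := by
      have := congrArg (fun m : V →ₗ[ℂ] V => m v) (hφ g)
      simpa using this
    show e (f (ρ g v)) = e (ρ g (f v))
    rw [h1, h4]
    show _ = ψ (ρ g (e.symm (φ v)))
    rw [h2, h3]
  let α : FDRep.of ρ ⟶ FDRep.of ρ :=
    { hom := FGModuleCat.ofHom f
      comm := fun g => by
        ext v
        exact congrArg (fun m : V →ₗ[ℂ] V => m v) (hcomm g) }
  obtain ⟨c, hc⟩ := CategoryTheory.endomorphism_simple_eq_smul_id ℂ α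
  have hfc : f = c • LinearMap.id := by
    have := congrArg (fun h => h.hom.hom.hom) hc
    exact this.symm
  refine ⟨c, ?_⟩
  ext v
  have hcv : f v = c • v := by rw [hfc]; rfl
  have h5 : ψ (f v) = φ v := e.apply_symm_apply _
  calc φ v = ψ (f v) := h5.symm
    _ = ψ (c • v) := by rw [hcv]
    _ = c • ψ v := by rw [map_smul]

lemma intertwines_apply {ρ : Representation ℂ G V} {ξ : G →* ℂ} {φ : V →ₗ[ℂ] V}
    (h : Intertwines ρ ξ φ) (g : G) (v : V) : φ (ρ g v) = ξ g • ρ g (φ v) := by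
  have := congrArg (fun m : V →ₗ[ℂ] V => m v) (h g)
  simpa using this

lemma intertwines_comp {ρ : Representation ℂ G V} {ξ₁ ξ₂ : G →* ℂ} {φ₁ φ₂ : V →ₗ[ℂ] V}
    (h₁ : Intertwines ρ ξ₁ φ₁) (h₂ : Intertwines ρ ξ₂ φ₂) :
    Intertwines ρ (ξ₁ * ξ₂) (φ₂ ∘ₗ φ₁) := by
  intro g
  ext v
  simp only [LinearMap.comp_apply, LinearMap.smul_apply, MonoidHom.mul_apply]
  rw [intertwines_apply h₁, map_smul, intertwines_apply h₂, smul_smul]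

lemma intertwines_one (ρ : Representation ℂ G V) : Intertwines ρ 1 LinearMap.id := by
  intro g; ext v; simp

lemma nontrivialV (ρ : Representation ℂ G V) (hirr : CategoryTheory.Simple (FDRep.of ρ)) :
    Nontrivial V := by
  by_contra h
  rw [not_nontrivial_iff_subsingleton] at h
  have : (𝟙 (FDRep.of ρ)) = 0 := by
    apply Action.hom_ext
    ext v
    have h2 : ∀ x y : V, x = y := fun x y => Subsingleton.elim x y
    exact h2 _ _
  exact CategoryTheory.id_nonzero (FDRep.of ρ) this

set_option maxHeartbeats 1000000 in
lemma exists_intertwiner (ρ : Representation ℂ G V) (hirr : CategoryTheory.Simple (FDRep.of ρ))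
    (ξ : G →* ℂ) (hξ : StabilizesChar ρ ξ) :
    ∃ f : V →ₗ[ℂ] V, f ≠ 0 ∧ Intertwines ρ ξ f := by
  haveI inv : Invertible (Fintype.card G : ℂ) :=
    invertibleOfNonzero (by exact_mod_cast Fintype.card_ne_zero)
  set σ := twist ρ ξ with hσ
  have havg := FDRep.average_char_eq_finrank_invariants (k := ℂ)
    (FDRep.of (Representation.linHom ρ σ))
  have hchar : ∀ g : G, (FDRep.of (Representation.linHom ρ σ)).character g
      = (FDRep.of ρ).character g * (FDRep.of ρ).character g⁻¹ := by
    intro g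
    have h1 : (FDRep.of (Representation.linHom ρ σ)).character g
        = (FDRep.of ρ).character g⁻¹ * (FDRep.of σ).character g :=
      FDRep.char_linHom (FDRep.of ρ) (FDRep.of σ) g
    have h2 : (FDRep.of σ).character g = ξ g * (FDRep.of ρ).character g := by
      show LinearMap.trace ℂ V (ξ g • ρ g) = ξ g * LinearMap.trace ℂ V (ρ g)
      rw [map_smul]
      rfl
    have hch : (FDRep.of ρ).character g = LinearMap.trace ℂ V (ρ g) := rfl
    rw [h1, h2, hch, hξ g, ← hch, mul_comm]
  have horth : ⅟ (Fintype.card G : ℂ) •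
      ∑ g : G, (FDRep.of ρ).character g * (FDRep.of ρ).character g⁻¹ = 1 := by
    letI : Fintype ↑(G) := ‹Fintype G›
    letI : Invertible ((Fintype.card ↑(G)) : ℂ) := inv
    haveI hS : @Simple (FDRep ℂ ↑(G)) _ _ (FDRep.of ρ) := hirr
    have h := FDRep.char_orthonormal (k := ℂ) (G := G) (FDRep.of ρ) (FDRep.of ρ)
    rw [if_pos ⟨Iso.refl _⟩] at h
    rw [Nat.card_eq_fintype_card] at h
    rw [invOf_eq_inv, smul_eq_mul]
    exact_mod_cast h
  have hone : ⅟ (Fintype.card G : ℂ) •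
      ∑ g : G, (FDRep.of (Representation.linHom ρ σ)).character g = 1 := by
    simp only [hchar]; exact horth
  have hfin : Module.finrank ℂ
      (Representation.invariants (FDRep.of (Representation.linHom ρ σ)).ρ) = 1 := by
    have h2 := havg.symm.trans (show (Nat.card G : ℂ)⁻¹ * ∑ g : G, (FDRep.of (Representation.linHom ρ σ)).character g = 1 by rw [Nat.card_eq_fintype_card, ← invOf_eq_inv, ← smul_eq_mul]; exact hone)
    exact_mod_cast h2
  have : Nontrivial (Representation.invariants (FDRep.of (Representation.linHom ρ σ)).ρ) :=
    Module.nontrivial_of_finrank_pos (R := ℂ) (by omega)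
  obtain ⟨f, hf⟩ :=
    exists_ne (0 : (Representation.invariants (FDRep.of (Representation.linHom ρ σ)).ρ))
  have hF0 : (f.1 : V →ₗ[ℂ] V) ≠ 0 := fun h => hf (Subtype.ext h)
  refine ⟨f.1, hF0, ?_⟩
  intro g
  have h : σ g ∘ₗ (f.1 : V →ₗ[ℂ] V) ∘ₗ ρ g⁻¹ = f.1 := f.2 g
  have hcomp : (σ g ∘ₗ (f.1 : V →ₗ[ℂ] V) ∘ₗ ρ g⁻¹) ∘ₗ ρ g = σ g ∘ₗ (f.1 : V →ₗ[ℂ] V) := by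
    ext v
    have : ρ g⁻¹ (ρ g v) = v := by
      rw [← Module.End.mul_apply, ← map_mul, inv_mul_cancel, map_one, Module.End.one_apply]
    simp [this]
  calc (f.1 : V →ₗ[ℂ] V) ∘ₗ ρ g = (σ g ∘ₗ (f.1 : V →ₗ[ℂ] V) ∘ₗ ρ g⁻¹) ∘ₗ ρ g := by rw [h]
    _ = σ g ∘ₗ (f.1 : V →ₗ[ℂ] V) := hcomp
    _ = ξ g • (ρ g ∘ₗ (f.1 : V →ₗ[ℂ] V)) := by
        show (ξ g • ρ g) ∘ₗ (f.1 : V →ₗ[ℂ] V) = _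
        rw [LinearMap.smul_comp]

end CommutatorPairing

open CommutatorPairing in
/-- For an irreducible representation `ρ` of a finite group `G` and one-dimensional
characters `ξ₁, ξ₂` stabilizing `χ = tr ρ`, the commutator `φ₂φ₁φ₂⁻¹φ₁⁻¹` of any choice of
bijective intertwiners `φᵢ : V → V_{ξᵢ}` is a scalar `B ξ₁ ξ₂` independent of the choices
(expressed as `φ₂ ∘ φ₁ = B ξ₁ ξ₂ • (φ₁ ∘ φ₂)`), this scalar is a root of unity, and the
pairing `B` on the stabilizer of `χ` is bilinear and anti-symmetric with `B ξ ξ = 1`. -/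
theorem commutator_pairing_of_intertwiners {G V : Type} [Group G] [Fintype G]
    [AddCommGroup V] [Module ℂ V] [FiniteDimensional ℂ V]
    (ρ : Representation ℂ G V) (hirr : CategoryTheory.Simple (FDRep.of ρ)) :
    ∃ B : (G →* ℂ) → (G →* ℂ) → ℂ,
      (∀ (ξ₁ ξ₂ : G →* ℂ) (φ₁ φ₂ : V →ₗ[ℂ] V),
          StabilizesChar ρ ξ₁ → StabilizesChar ρ ξ₂ →
          Intertwines ρ ξ₁ φ₁ → Intertwines ρ ξ₂ φ₂ →
          Function.Bijective φ₁ → Function.Bijective φ₂ →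
          φ₂ ∘ₗ φ₁ = B ξ₁ ξ₂ • (φ₁ ∘ₗ φ₂)) ∧
      (∀ ξ₁ ξ₂ : G →* ℂ, StabilizesChar ρ ξ₁ → StabilizesChar ρ ξ₂ →
          B ξ₁ ξ₂ ^ Fintype.card G = 1) ∧
      (∀ ξ : G →* ℂ, StabilizesChar ρ ξ → B ξ ξ = 1) ∧
      (∀ ξ₁ ξ₂ : G →* ℂ, StabilizesChar ρ ξ₁ → StabilizesChar ρ ξ₂ →
          B ξ₁ ξ₂ * B ξ₂ ξ₁ = 1) ∧
      (∀ ξ₁ ξ₂ ξ₃ : G →* ℂ, StabilizesChar ρ ξ₁ → StabilizesChar ρ ξ₂ →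
          StabilizesChar ρ ξ₃ → B ξ₁ (ξ₂ * ξ₃) = B ξ₁ ξ₂ * B ξ₁ ξ₃) := by
  classical
  have hnt : Nontrivial V := nontrivialV ρ hirr
  -- existence of bijective intertwiners for stabilizing characters
  have hex : ∀ ξ : G →* ℂ, StabilizesChar ρ ξ →
      ∃ φ : V →ₗ[ℂ] V, Intertwines ρ ξ φ ∧ Function.Bijective φ := by
    intro ξ hξ
    obtain ⟨f, hf0, hfi⟩ := exists_intertwiner ρ hirr ξ hξ
    refine ⟨f, hfi, ?_⟩
    have hker : LinearMap.ker f = ⊥ := by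
      rcases invariant_submodule_eq_bot_or_top ρ hirr (LinearMap.ker f) (fun g v hv => by
        rw [LinearMap.mem_ker] at hv ⊢
        rw [intertwines_apply hfi, hv, map_zero, smul_zero]) with h | h
      · exact h
      · exact absurd (LinearMap.ker_eq_top.mp h) hf0
    have hinj := LinearMap.ker_eq_bot.mp hker
    exact ⟨hinj, LinearMap.injective_iff_surjective.mp hinj⟩
  -- chosen intertwiners
  set φs : (G →* ℂ) → (V →ₗ[ℂ] V) := fun ξ =>
    if h : StabilizesChar ρ ξ then (hex ξ h).choose else LinearMap.id with hφs
  have hφint : ∀ ξ, StabilizesChar ρ ξ → Intertwines ρ ξ (φs ξ) := fun ξ h => by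
    rw [hφs]; simp only [dif_pos h]; exact (hex ξ h).choose_spec.1
  have hφbij : ∀ ξ, StabilizesChar ρ ξ → Function.Bijective (φs ξ) := fun ξ h => by
    rw [hφs]; simp only [dif_pos h]; exact (hex ξ h).choose_spec.2
  -- commutator scalar for any pair of bijective intertwiners
  have hpair : ∀ (ξ₁ ξ₂ : G →* ℂ) (φ₁ φ₂ : V →ₗ[ℂ] V),
      Intertwines ρ ξ₁ φ₁ → Intertwines ρ ξ₂ φ₂ →
      Function.Bijective φ₁ → Function.Bijective φ₂ →
      ∃ c : ℂ, φ₂ ∘ₗ φ₁ = c • (φ₁ ∘ₗ φ₂) := by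
    intro ξ₁ ξ₂ φ₁ φ₂ h₁ h₂ hb₁ hb₂
    have ha : Intertwines ρ (ξ₁ * ξ₂) (φ₂ ∘ₗ φ₁) := intertwines_comp h₁ h₂
    have hb : Intertwines ρ (ξ₁ * ξ₂) (φ₁ ∘ₗ φ₂) := by
      rw [mul_comm ξ₁ ξ₂]
      exact intertwines_comp h₂ h₁
    exact schur_scalar ρ hirr ha hb (hb₁.comp hb₂)
  -- uniqueness of the scalar
  have huniq : ∀ (c d : ℂ) (f : V →ₗ[ℂ] V), Function.Bijective f →
      c • f = d • f → c = d := by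
    intro c d f hf h
    obtain ⟨v, hv⟩ := exists_ne (0 : V)
    have hfv : f v ≠ 0 := fun h0 => hv (hf.1 (by rw [h0, map_zero]))
    have h1 : c • f v = d • f v := by
      have := congrArg (fun m : V →ₗ[ℂ] V => m v) h
      simpa using this
    have h2 : (c - d) • f v = 0 := by rw [sub_smul, h1, sub_self]
    rcases smul_eq_zero.mp h2 with h3 | h3
    · exact sub_eq_zero.mp h3
    · exact absurd h3 hfv
  -- transfer of the scalar between choices
  have htrans : ∀ (ξ₁ ξ₂ : G →* ℂ) (φ₁ φ₂ ψ₁ ψ₂ : V →ₗ[ℂ] V) (c : ℂ),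
      Intertwines ρ ξ₁ φ₁ → Intertwines ρ ξ₂ φ₂ →
      Intertwines ρ ξ₁ ψ₁ → Intertwines ρ ξ₂ ψ₂ →
      Function.Bijective ψ₁ → Function.Bijective ψ₂ →
      ψ₂ ∘ₗ ψ₁ = c • (ψ₁ ∘ₗ ψ₂) → φ₂ ∘ₗ φ₁ = c • (φ₁ ∘ₗ φ₂) := by
    intro ξ₁ ξ₂ φ₁ φ₂ ψ₁ ψ₂ c h₁ h₂ k₁ k₂ kb₁ kb₂ hc
    obtain ⟨a, ha⟩ := schur_scalar ρ hirr h₁ k₁ kb₁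
    obtain ⟨b, hb⟩ := schur_scalar ρ hirr h₂ k₂ kb₂
    rw [ha, hb]
    ext v
    simp only [LinearMap.comp_apply, LinearMap.smul_apply, map_smul]
    have hcv : ψ₂ (ψ₁ v) = c • ψ₁ (ψ₂ v) := by
      have := congrArg (fun m : V →ₗ[ℂ] V => m v) hc
      simpa using this
    rw [hcv]
    rw [smul_smul, smul_smul, smul_smul, smul_smul]
    ring_nf
  -- the pairing
  set B : (G →* ℂ) → (G →* ℂ) → ℂ := fun ξ₁ ξ₂ =>
    if h : StabilizesChar ρ ξ₁ ∧ StabilizesChar ρ ξ₂ then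
      (hpair ξ₁ ξ₂ (φs ξ₁) (φs ξ₂) (hφint _ h.1) (hφint _ h.2)
        (hφbij _ h.1) (hφbij _ h.2)).choose
    else 1 with hB
  have hBspec : ∀ (ξ₁ ξ₂ : G →* ℂ) (h₁ : StabilizesChar ρ ξ₁) (h₂ : StabilizesChar ρ ξ₂),
      φs ξ₂ ∘ₗ φs ξ₁ = B ξ₁ ξ₂ • (φs ξ₁ ∘ₗ φs ξ₂) := by
    intro ξ₁ ξ₂ h₁ h₂
    have hBval : B ξ₁ ξ₂ = (hpair ξ₁ ξ₂ (φs ξ₁) (φs ξ₂) (hφint _ h₁) (hφint _ h₂)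
        (hφbij _ h₁) (hφbij _ h₂)).choose := by
      simp only [hB]
      exact dif_pos ⟨h₁, h₂⟩
    rw [hBval]
    exact (hpair ξ₁ ξ₂ (φs ξ₁) (φs ξ₂) (hφint _ h₁) (hφint _ h₂)
      (hφbij _ h₁) (hφbij _ h₂)).choose_spec
  -- main property
  have P1 : ∀ (ξ₁ ξ₂ : G →* ℂ) (φ₁ φ₂ : V →ₗ[ℂ] V),
      StabilizesChar ρ ξ₁ → StabilizesChar ρ ξ₂ →
      Intertwines ρ ξ₁ φ₁ → Intertwines ρ ξ₂ φ₂ →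
      Function.Bijective φ₁ → Function.Bijective φ₂ →
      φ₂ ∘ₗ φ₁ = B ξ₁ ξ₂ • (φ₁ ∘ₗ φ₂) := by
    intro ξ₁ ξ₂ φ₁ φ₂ h₁ h₂ i₁ i₂ b₁ b₂
    exact htrans ξ₁ ξ₂ φ₁ φ₂ (φs ξ₁) (φs ξ₂) (B ξ₁ ξ₂) i₁ i₂
      (hφint _ h₁) (hφint _ h₂) (hφbij _ h₁) (hφbij _ h₂) (hBspec ξ₁ ξ₂ h₁ h₂)
  -- stabilizer closure
  have stab_one : StabilizesChar ρ (1 : G →* ℂ) := by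
    intro g; simp
  have stab_mul : ∀ ξ₁ ξ₂ : G →* ℂ, StabilizesChar ρ ξ₁ → StabilizesChar ρ ξ₂ →
      StabilizesChar ρ (ξ₁ * ξ₂) := by
    intro ξ₁ ξ₂ h₁ h₂ g
    have : (ξ₁ * ξ₂) g = ξ₁ g * ξ₂ g := rfl
    rw [this, mul_assoc, h₂ g, h₁ g]
  have stab_pow : ∀ (ξ : G →* ℂ) (n : ℕ), StabilizesChar ρ ξ → StabilizesChar ρ (ξ ^ n) := by
    intro ξ n hξ
    induction n with
    | zero => simpa using stab_one
    | succ n ih =>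
        have : ξ ^ (n + 1) = ξ ^ n * ξ := pow_succ ξ n
        rw [this]
        exact stab_mul _ _ ih hξ
  -- B ξ ξ = 1
  have Pdiag : ∀ ξ : G →* ℂ, StabilizesChar ρ ξ → B ξ ξ = 1 := by
    intro ξ hξ
    have h := hBspec ξ ξ hξ hξ
    have hbj : Function.Bijective (φs ξ ∘ₗ φs ξ) := (hφbij ξ hξ).comp (hφbij ξ hξ)
    have : (1 : ℂ) • (φs ξ ∘ₗ φs ξ) = B ξ ξ • (φs ξ ∘ₗ φs ξ) := by
      rw [one_smul]; exact h
    exact (huniq 1 (B ξ ξ) _ hbj this).symm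
  -- B ξ₁ 1 = 1
  have Pone : ∀ ξ : G →* ℂ, StabilizesChar ρ ξ → B ξ 1 = 1 := by
    intro ξ hξ
    have h := P1 ξ 1 (φs ξ) LinearMap.id hξ stab_one (hφint _ hξ) (intertwines_one ρ)
      (hφbij _ hξ) Function.bijective_id
    have h2 : (1 : ℂ) • (LinearMap.id ∘ₗ φs ξ) = B ξ 1 • (φs ξ ∘ₗ LinearMap.id) := by
      rw [one_smul]; exact h
    have h3 : (LinearMap.id ∘ₗ φs ξ : V →ₗ[ℂ] V) = φs ξ ∘ₗ LinearMap.id := by ext v; rfl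
    rw [h3] at h2
    exact (huniq 1 (B ξ 1) _ (by simpa using hφbij _ hξ) h2).symm
  -- antisymmetry
  have Panti : ∀ ξ₁ ξ₂ : G →* ℂ, StabilizesChar ρ ξ₁ → StabilizesChar ρ ξ₂ →
      B ξ₁ ξ₂ * B ξ₂ ξ₁ = 1 := by
    intro ξ₁ ξ₂ h₁ h₂
    have h12 := hBspec ξ₁ ξ₂ h₁ h₂
    have h21 := hBspec ξ₂ ξ₁ h₂ h₁
    have hbj : Function.Bijective (φs ξ₂ ∘ₗ φs ξ₁) := (hφbij _ h₂).comp (hφbij _ h₁)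
    have key : (1 : ℂ) • (φs ξ₂ ∘ₗ φs ξ₁) = (B ξ₁ ξ₂ * B ξ₂ ξ₁) • (φs ξ₂ ∘ₗ φs ξ₁) := by
      conv_lhs => rw [one_smul, h12, h21]
      rw [smul_smul]
    exact (huniq 1 _ _ hbj key).symm
  -- multiplicativity
  have Pmul : ∀ ξ₁ ξ₂ ξ₃ : G →* ℂ, StabilizesChar ρ ξ₁ → StabilizesChar ρ ξ₂ →
      StabilizesChar ρ ξ₃ → B ξ₁ (ξ₂ * ξ₃) = B ξ₁ ξ₂ * B ξ₁ ξ₃ := by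
    intro ξ₁ ξ₂ ξ₃ h₁ h₂ h₃
    have h23 : StabilizesChar ρ (ξ₂ * ξ₃) := stab_mul _ _ h₂ h₃
    have hint23 : Intertwines ρ (ξ₂ * ξ₃) (φs ξ₂ ∘ₗ φs ξ₃) := by
      rw [mul_comm ξ₂ ξ₃]
      exact intertwines_comp (hφint _ h₃) (hφint _ h₂)
    have hbij23 : Function.Bijective (φs ξ₂ ∘ₗ φs ξ₃) := (hφbij _ h₂).comp (hφbij _ h₃)
    have hbig := P1 ξ₁ (ξ₂ * ξ₃) (φs ξ₁) (φs ξ₂ ∘ₗ φs ξ₃) h₁ h23 (hφint _ h₁) hint23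
      (hφbij _ h₁) hbij23
    -- hbig : (φs ξ₂ ∘ₗ φs ξ₃) ∘ₗ φs ξ₁ = B ξ₁ (ξ₂*ξ₃) • (φs ξ₁ ∘ₗ (φs ξ₂ ∘ₗ φs ξ₃))
    have h13 := hBspec ξ₁ ξ₃ h₁ h₃
    have h12 := hBspec ξ₁ ξ₂ h₁ h₂
    have hstep : (φs ξ₂ ∘ₗ φs ξ₃) ∘ₗ φs ξ₁
        = (B ξ₁ ξ₂ * B ξ₁ ξ₃) • (φs ξ₁ ∘ₗ (φs ξ₂ ∘ₗ φs ξ₃)) := by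
      have e1 : (φs ξ₂ ∘ₗ φs ξ₃) ∘ₗ φs ξ₁ = φs ξ₂ ∘ₗ (φs ξ₃ ∘ₗ φs ξ₁) := by
        rw [LinearMap.comp_assoc]
      rw [e1, h13, LinearMap.comp_smul, ← LinearMap.comp_assoc, h12]
      rw [LinearMap.smul_comp, smul_smul, LinearMap.comp_assoc, mul_comm (B ξ₁ ξ₃)]
    have := hbig.symm.trans hstep
    have hbF : Function.Bijective ⇑(φs ξ₁ ∘ₗ (φs ξ₂ ∘ₗ φs ξ₃)) := by
      rw [LinearMap.coe_comp]
      exact (hφbij _ h₁).comp hbij23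
    exact huniq _ _ (φs ξ₁ ∘ₗ (φs ξ₂ ∘ₗ φs ξ₃)) hbF this
  -- roots of unity
  have Ppow : ∀ ξ₁ ξ₂ : G →* ℂ, StabilizesChar ρ ξ₁ → StabilizesChar ρ ξ₂ →
      ∀ n : ℕ, B ξ₁ (ξ₂ ^ n) = B ξ₁ ξ₂ ^ n := by
    intro ξ₁ ξ₂ h₁ h₂ n
    induction n with
    | zero => simpa using Pone ξ₁ h₁
    | succ n ih =>
        rw [pow_succ, Pmul ξ₁ (ξ₂ ^ n) ξ₂ h₁ (stab_pow ξ₂ n h₂) h₂, ih, pow_succ]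
  have Proot : ∀ ξ₁ ξ₂ : G →* ℂ, StabilizesChar ρ ξ₁ → StabilizesChar ρ ξ₂ →
      B ξ₁ ξ₂ ^ Fintype.card G = 1 := by
    intro ξ₁ ξ₂ h₁ h₂
    have hpow : ξ₂ ^ Fintype.card G = 1 := by
      ext g
      have : (ξ₂ ^ Fintype.card G) g = ξ₂ g ^ Fintype.card G := by
        simp [MonoidHom.pow_apply]
      rw [this, ← map_pow, pow_card_eq_one, map_one]
      rfl
    rw [← Ppow ξ₁ ξ₂ h₁ h₂, hpow]
    exact Pone ξ₁ h₁
  exact ⟨B, P1, Proot, Pdiag, Panti, Pmul⟩
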